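/- For every finite simple graph G, vertex s of G, and natural number k, the Grundy value of Undirected Geography with k total passes satisfies g_pass((G,s), k) = g(G,s) XOR (k mod 2), where XOR is bitwise exclusive-or of natural numbers. In particular, g_pass((G,s),k) = g(G,s) when k is even, and g_pass((G,s),k) = g(G,s) XOR 1 when k is odd. -/

import Mathlib

noncomputable def mex (s : Finset ℕ) : ℕ := sInf {n : ℕ | n ∉ s}

noncomputable def geo {V : Type} [DecidableEq V] (G : SimpleGraph V) [DecidableRel G.Adj]
    (A : Finset V) (s : V) : ℕ :=
  if h : s ∈ A then
    mex (((A.erase s).filter (fun v => G.Adj s v)).image (fun v => geo G (A.erase s) v))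
  else 0
termination_by A.card
decreasing_by
  simp_wf
  exact Finset.card_erase_lt_of_mem h

/-- The Grundy value of Undirected Geography with passes: the position is
`((A, s), j)` where `A` is the set of remaining vertices, the token is on `s`, and `j`
passes remain; the options are the usual geography moves (keeping `j`) together with a
pass to `((A, s), j − 1)` when `j ≥ 1`. -/
noncomputable def geoPass {V : Type} [DecidableEq V] (G : SimpleGraph V)
    [DecidableRel G.Adj] (A : Finset V) (s : V) (j : ℕ) : ℕ :=
  if h : s ∈ A then
    match j with
    | 0 =>
      mex (((A.erase s).filter (fun v => G.Adj s v)).image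
        (fun v => geoPass G (A.erase s) v 0))
    | j' + 1 =>
      mex ((((A.erase s).filter (fun v => G.Adj s v)).image
        (fun v => geoPass G (A.erase s) v (j' + 1))) ∪ {geoPass G A s j'})
  else 0
termination_by (A.card, j)
decreasing_by
  · exact Prod.Lex.left _ _ (Finset.card_erase_lt_of_mem h)
  · exact Prod.Lex.left _ _ (Finset.card_erase_lt_of_mem h)
  · exact Prod.Lex.right _ (Nat.lt_succ_self j')

/- ### Auxiliary lemmas -/

lemma aux_xor_one_eq (n : ℕ) : n ^^^ 1 = if n % 2 = 0 then n + 1 else n - 1 := by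
  have h1 : (1 : ℕ) = Nat.bit true 0 := by simp [Nat.bit]
  rcases Nat.even_or_odd n with ⟨q, hq⟩ | ⟨q, hq⟩
  · have h2 : n = Nat.bit false q := by simp [Nat.bit]; omega
    have h3 : (2 * q) % 2 = 0 := by omega
    rw [h2, h1, Nat.xor_bit]
    simp only [Nat.bit, bne, Bool.cond_false, Bool.cond_true]
    norm_num [h3]
  · have h2 : n = Nat.bit true q := by simp [Nat.bit]; omega
    have h3 : (2 * q + 1) % 2 = 1 := by omega
    rw [h2, h1, Nat.xor_bit]
    simp only [Nat.bit, bne, Bool.cond_false, Bool.cond_true]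
    norm_num [h3]

lemma aux_xor_one_ne (g : ℕ) : g ^^^ 1 ≠ g := by
  intro h
  have : g ^^^ 1 = g ^^^ 0 := by simpa using h
  exact one_ne_zero (Nat.xor_right_injective this)

lemma aux_xor_one_lt {n g : ℕ} (hne : n ≠ g) (h : n < g ^^^ 1) : n ^^^ 1 < g := by
  rw [aux_xor_one_eq] at h ⊢
  split_ifs at h ⊢ <;> omega

lemma mex_not_mem (s : Finset ℕ) : mex s ∉ s := by
  obtain ⟨n, hn⟩ := Infinite.exists_notMem_finset s
  exact Nat.sInf_mem (⟨n, hn⟩ : Set.Nonempty {n : ℕ | n ∉ s})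

lemma mex_le {s : Finset ℕ} {n : ℕ} (hn : n ∉ s) : mex s ≤ n := Nat.sInf_le hn

lemma mem_of_lt_mex {s : Finset ℕ} {n : ℕ} (h : n < mex s) : n ∈ s := by
  by_contra hn
  exact absurd (mex_le hn) (by omega)

lemma mex_eq {s : Finset ℕ} {a : ℕ} (h1 : a ∉ s) (h2 : ∀ n < a, n ∈ s) : mex s = a := by
  have hle : mex s ≤ a := mex_le h1
  rcases lt_or_eq_of_le hle with h | h
  · exact absurd (h2 _ h) (mex_not_mem s)
  · exact h

lemma mex_union_xor_zero (S : Finset ℕ) : mex (S ∪ {mex S ^^^ 1}) = mex S := by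
  apply mex_eq
  · intro h
    rcases Finset.mem_union.1 h with h | h
    · exact mex_not_mem S h
    · exact aux_xor_one_ne (mex S) (Finset.mem_singleton.1 h).symm
  · intro n hn
    exact Finset.mem_union_left _ (mem_of_lt_mex hn)

lemma mex_union_xor_one (S : Finset ℕ) :
    mex (S.image (· ^^^ 1) ∪ {mex S}) = mex S ^^^ 1 := by
  apply mex_eq
  · intro h
    rcases Finset.mem_union.1 h with h | h
    · obtain ⟨x, hx, hxe⟩ := Finset.mem_image.1 h
      exact mex_not_mem S ((Nat.xor_left_inj.1 hxe) ▸ hx)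
    · exact aux_xor_one_ne (mex S) (Finset.mem_singleton.1 h)
  · intro n hn
    by_cases hne : n = mex S
    · exact Finset.mem_union_right _ (Finset.mem_singleton.2 hne)
    · refine Finset.mem_union_left _ (Finset.mem_image.2 ⟨n ^^^ 1, ?_, ?_⟩)
      · exact mem_of_lt_mex (aux_xor_one_lt hne hn)
      · exact xor_cancel_right n 1

lemma geoPass_zero {V : Type} [DecidableEq V] (G : SimpleGraph V) [DecidableRel G.Adj]
    (A : Finset V) (s : V) : geoPass G A s 0 = geo G A s := by
  rw [geoPass, geo]
  by_cases h : s ∈ A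
  · simp only [dif_pos h]
    congr 1
    apply Finset.image_congr
    intro v hv
    exact geoPass_zero G (A.erase s) v
  · simp [h]
termination_by A.card
decreasing_by
  simp_wf
  exact Finset.card_erase_lt_of_mem h

lemma geoPass_eq {V : Type} [DecidableEq V] (G : SimpleGraph V) [DecidableRel G.Adj]
    (A : Finset V) (s : V) (j : ℕ) (hs : s ∈ A) :
    geoPass G A s j = geo G A s ^^^ (j % 2) := by
  match j with
  | 0 => simpa using geoPass_zero G A s
  | j' + 1 =>
    rw [geoPass]
    simp only [dif_pos hs]
    have hgeo : geo G A s =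
        mex (((A.erase s).filter (fun v => G.Adj s v)).image (fun v => geo G (A.erase s) v)) := by
      rw [geo, dif_pos hs]
    have himg : ((A.erase s).filter (fun v => G.Adj s v)).image
          (fun v => geoPass G (A.erase s) v (j' + 1)) =
        ((A.erase s).filter (fun v => G.Adj s v)).image
          (fun v => geo G (A.erase s) v ^^^ ((j' + 1) % 2)) := by
      apply Finset.image_congr
      intro v hv
      exact geoPass_eq G (A.erase s) v (j' + 1) (Finset.mem_of_mem_filter v hv)
    have hpass : geoPass G A s j' = geo G A s ^^^ (j' % 2) := geoPass_eq G A s j' hs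
    rw [himg, hpass]
    rcases Nat.even_or_odd j' with ⟨q, hq⟩ | ⟨q, hq⟩
    · -- j' even : (j'+1) % 2 = 1, j' % 2 = 0
      have h1 : (j' + 1) % 2 = 1 := by omega
      have h0 : j' % 2 = 0 := by omega
      rw [h1, h0, Nat.xor_zero, hgeo]
      rw [show (fun v => geo G (A.erase s) v ^^^ 1) =
          (fun x => x ^^^ 1) ∘ (fun v => geo G (A.erase s) v) from rfl,
        ← Finset.image_image]
      exact mex_union_xor_one _
    · -- j' odd
      have h1 : (j' + 1) % 2 = 0 := by omega
      have h0 : j' % 2 = 1 := by omega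
      rw [h1, h0, Nat.xor_zero, hgeo]
      simp only [Nat.xor_zero]
      exact mex_union_xor_zero _
termination_by (A.card, j)
decreasing_by
  · exact Prod.Lex.left _ _ (Finset.card_erase_lt_of_mem hs)
  · exact Prod.Lex.right _ (Nat.lt_succ_self j')

/-- `g_pass((G,s), k) = g(G,s) XOR (k mod 2)`; in particular the value is
`g(G,s)` when `k` is even and `g(G,s) XOR 1` when `k` is odd. -/
theorem stmt10 {V : Type} [Fintype V] [DecidableEq V]
    (G : SimpleGraph V) [DecidableRel G.Adj] (s : V) (k : ℕ) :
    geoPass G Finset.univ s k = (geo G Finset.univ s) ^^^ (k % 2) ∧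
    (k % 2 = 0 → geoPass G Finset.univ s k = geo G Finset.univ s) ∧
    (k % 2 = 1 → geoPass G Finset.univ s k = (geo G Finset.univ s) ^^^ 1) := by
  have h := geoPass_eq G Finset.univ s k (Finset.mem_univ s)
  refine ⟨h, ?_, ?_⟩
  · intro hk; rw [h, hk, Nat.xor_zero]
  · intro hk; rw [h, hk]
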